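/- Suppose d_1, …, d_N and d_1', …, d_N' are two sequences of positive integers which both satisfy the circular symmetry property with respect to N and M. If d_1 = d_1', then d_x = d_x' for all x with 1 ≤ x ≤ N. -/
import Mathlib


/-- A sequence `d_1, …, d_N` of positive integers (given as a function `d : ℕ → ℕ`)
has the *circular symmetry property* with respect to `N` and `M` if
`d_x + d_y = 2M/(x·y)` whenever `r/x` and `s/y` are consecutive terms of the Farey
sequence `F_N`; the fractions `r/x < s/y` (in lowest terms, with `s/y ≤ 1` and
denominators at most `N`) are consecutive in `F_N` precisely when `s·x − r·y = 1`
and `x + y > N`. -/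
def CircularSymmetry (N : ℕ) (M : ℚ) (d : ℕ → ℕ) : Prop :=
  ∀ r s x y : ℕ, 1 ≤ x → x ≤ N → 1 ≤ y → y ≤ N →
    Nat.gcd r x = 1 → Nat.gcd s y = 1 →
    (r : ℚ) / (x : ℚ) < (s : ℚ) / (y : ℚ) → (s : ℚ) / (y : ℚ) ≤ 1 →
    (s : ℤ) * (x : ℤ) - (r : ℤ) * (y : ℤ) = 1 → N < x + y →
    (d x : ℚ) + (d y : ℚ) = 2 * M / ((x : ℚ) * (y : ℚ))

/-- Two sequences of positive integers which both satisfy the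
circular symmetry property with respect to `N` and `M`, and which agree at `1`,
agree at every `x` with `1 ≤ x ≤ N`. -/
theorem statement_13 (N : ℕ) (M : ℚ) (d d' : ℕ → ℕ)
    (hd : ∀ x, 1 ≤ x → x ≤ N → 0 < d x) (hd' : ∀ x, 1 ≤ x → x ≤ N → 0 < d' x)
    (hcs : CircularSymmetry N M d) (hcs' : CircularSymmetry N M d')
    (h1 : d 1 = d' 1) :
    ∀ x, 1 ≤ x → x ≤ N → d x = d' x := by
  -- whenever the Farey-neighbor conditions hold, the two sums agree
  have edge : ∀ r s x y : ℕ, 1 ≤ x → x ≤ N → 1 ≤ y → y ≤ N →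
      Nat.gcd r x = 1 → Nat.gcd s y = 1 →
      (r : ℚ) / (x : ℚ) < (s : ℚ) / (y : ℚ) → (s : ℚ) / (y : ℚ) ≤ 1 →
      (s : ℤ) * (x : ℤ) - (r : ℤ) * (y : ℤ) = 1 → N < x + y →
      d x + d y = d' x + d' y := by
    intro r s x y hx1 hxN hy1 hyN hgr hgs hlt hle hdet hsum
    have h := (hcs r s x y hx1 hxN hy1 hyN hgr hgs hlt hle hdet hsum).trans
      (hcs' r s x y hx1 hxN hy1 hyN hgr hgs hlt hle hdet hsum).symm
    exact_mod_cast h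
  -- values with large index agree
  have big : ∀ j k : ℕ, N - k = j → N ≤ 2 * k → 1 ≤ k → k ≤ N → d k = d' k := by
    intro j
    induction j with
    | zero =>
      intro k hj _ hk1 hkN
      have hkN' : k = N := by omega
      have hgr : Nat.gcd 0 1 = 1 := by simp
      have hgs : Nat.gcd 1 k = 1 := Nat.gcd_one_left k
      have hkpos : (0:ℚ) < (k:ℚ) := by exact_mod_cast hk1
      have hlt : ((0:ℕ):ℚ) / ((1:ℕ):ℚ) < ((1:ℕ):ℚ) / (k:ℚ) := by
        push_cast; rw [zero_div]; positivity
      have hle : (1:ℚ) / (k:ℚ) ≤ 1 := by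
        rw [div_le_one hkpos]; exact_mod_cast hk1
      have hdet : ((1:ℕ):ℤ) * ((1:ℕ):ℤ) - ((0:ℕ):ℤ) * ((k:ℕ):ℤ) = 1 := by push_cast; ring
      have := edge 0 1 1 k le_rfl (by omega) hk1 hkN hgr hgs hlt
        (by push_cast; exact hle) hdet (by omega)
      omega
    | succ j ih =>
      intro k hj hN2 hk1 hkN
      have hkN1 : k + 1 ≤ N := by omega
      have hk1' : d (k + 1) = d' (k + 1) := ih (k + 1) (by omega) (by omega) (by omega) hkN1
      have hkpos : (0:ℚ) < (k:ℚ) := by exact_mod_cast hk1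
      have hlt : (1:ℚ) / ((k:ℚ) + 1) < (1:ℚ) / (k:ℚ) := by
        apply div_lt_div_of_pos_left one_pos hkpos; linarith
      have hle : (1:ℚ) / (k:ℚ) ≤ 1 := by
        rw [div_le_one hkpos]; exact_mod_cast hk1
      have := edge 1 1 (k + 1) k (by omega) hkN1 hk1 hkN
        (Nat.gcd_one_left _) (Nat.gcd_one_left _)
        (by push_cast; exact hlt) (by push_cast; exact hle)
        (by push_cast; ring) (by omega)
      omega
  intro x hx1 hxN
  by_cases hbig : N ≤ 2 * x
  · exact big (N - x) x rfl hbig hx1 hxN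
  push_neg at hbig
  rcases Nat.lt_or_ge x 2 with hx2 | hx2
  · interval_cases x; exact h1
  -- small x: use the right Farey neighbor q/y of 1/x, where q = (N+1)/x, y = q*x - 1
  · set q := (N + 1) / x with hq
    have hdm : x * q + (N + 1) % x = N + 1 := by
      rw [hq]; exact Nat.div_add_mod (N + 1) x
    have hmod := Nat.mod_lt (N + 1) (show 0 < x by omega)
    have hxq : x * q = q * x := Nat.mul_comm x q
    have hq1 : 1 ≤ q := by
      rw [hq, Nat.le_div_iff_mul_le (by omega)]; omega
    set y := q * x - 1 with hy
    have hqx : q * x = y + 1 := by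
      have : 1 ≤ q * x := by nlinarith
      omega
    have hyN : y ≤ N := by omega
    have hy1 : 1 ≤ y := by nlinarith
    have hsum : N < x + y := by omega
    have hgs : Nat.gcd q y = 1 := by
      have h1' : Nat.gcd q y ∣ q * x - y :=
        Nat.dvd_sub ((Nat.gcd_dvd_left q y).mul_right x) (Nat.gcd_dvd_right q y)
      have : q * x - y = 1 := by omega
      rw [this] at h1'
      exact Nat.dvd_one.mp h1'
    have hxpos : (0:ℚ) < (x:ℚ) := by exact_mod_cast (by omega : 0 < x)
    have hypos : (0:ℚ) < (y:ℚ) := by exact_mod_cast hy1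
    have hqy : q ≤ y := by nlinarith
    have hlt : (1:ℚ) / (x:ℚ) < (q:ℚ) / (y:ℚ) := by
      rw [div_lt_div_iff₀ hxpos hypos]
      have : (q:ℚ) * (x:ℚ) = (y:ℚ) + 1 := by exact_mod_cast hqx
      linarith
    have hle : (q:ℚ) / (y:ℚ) ≤ 1 := by
      rw [div_le_one hypos]; exact_mod_cast hqy
    have hdet : ((q:ℕ):ℤ) * ((x:ℕ):ℤ) - ((1:ℕ):ℤ) * ((y:ℕ):ℤ) = 1 := by
      have : (q:ℤ) * (x:ℤ) = (y:ℤ) + 1 := by exact_mod_cast hqx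
      push_cast; linarith
    have hE := edge 1 q x y hx1 hxN hy1 hyN (Nat.gcd_one_left _) hgs
      (by push_cast; exact hlt) (by push_cast; exact hle) hdet hsum
    have hy0 : d y = d' y := big (N - y) y rfl (by omega) hy1 hyN
    omega
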